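/- arXiv:2507.22957 — 2 statements merged into one kernel-verified Lean document; each statement's English description precedes it below -/
import Mathlib

section
/- Let G be a simple graph and H a dilation of G. Then the transversal number of H equals the transversal number of G, i.e., τ(H) = τ(G). -/
open Finset

/-- Two vertices of a hypergraph (given by its finite set of hyperedges) are
adjacent if they are distinct and lie in a common hyperedge. -/
def HypAdj {W : Type*} (E : Finset (Finset W)) (u v : W) : Prop :=
  u ≠ v ∧ ∃ e ∈ E, u ∈ e ∧ v ∈ e

/-- A matching of a hypergraph: a set of pairwise disjoint hyperedges. -/
def IsHypMatching {W : Type*} (E M : Finset (Finset W)) : Prop :=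
  M ⊆ E ∧ ∀ a ∈ M, ∀ b ∈ M, a ≠ b → Disjoint a b

/-- Matching number of a hypergraph. -/
noncomputable def nuH {W : Type*} (E : Finset (Finset W)) : ℕ :=
  sSup {n | ∃ M : Finset (Finset W), IsHypMatching E M ∧ M.card = n}

/-- A transversal (vertex cover) of a hypergraph: meets every hyperedge. -/
def IsTransversal {W : Type*} (E : Finset (Finset W)) (T : Finset W) : Prop :=
  ∀ e ∈ E, ∃ w ∈ T, w ∈ e

/-- Transversal number of a hypergraph. -/
noncomputable def tauH {W : Type*} (E : Finset (Finset W)) : ℕ :=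
  sInf {n | ∃ T : Finset W, IsTransversal E T ∧ T.card = n}

/-- A dominating set of a hypergraph: every vertex outside it is adjacent
(shares a hyperedge) with some vertex inside it. -/
def IsDominatingH {W : Type*} (E : Finset (Finset W)) (D : Finset W) : Prop :=
  ∀ v, v ∉ D → ∃ u ∈ D, HypAdj E u v

/-- Domination number of a hypergraph on the (finite) vertex type `W`. -/
noncomputable def gammaH {W : Type*} (E : Finset (Finset W)) : ℕ :=
  sInf {n | ∃ D : Finset W, IsDominatingH E D ∧ D.card = n}

/-- The two-element finset associated to an unordered pair. -/
noncomputable def sym2ToFinset {V : Type*} (e : Sym2 V) : Finset V := by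
  classical exact Sym2.lift ⟨fun a b => ({a, b} : Finset V), fun a b => Finset.pair_comm a b⟩ e

/-- The edges of a simple graph, viewed as the hyperedges (of size two)
of a 2-uniform hypergraph. -/
noncomputable def graphEdges {V : Type*} [Fintype V] (G : SimpleGraph V) :
    Finset (Finset V) := by
  classical exact ((Finset.univ : Finset (Sym2 V)).filter (· ∈ G.edgeSet)).image sym2ToFinset

/-- A dominating set of a simple graph. -/
def IsDominatingG {V : Type*} (G : SimpleGraph V) (D : Finset V) : Prop :=
  ∀ v, v ∉ D → ∃ u ∈ D, G.Adj u v

/-- Domination number of a simple graph. -/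
noncomputable def gammaG {V : Type*} [Fintype V] (G : SimpleGraph V) : ℕ :=
  sInf {n | ∃ D : Finset V, IsDominatingG G D ∧ D.card = n}

/-- A Berge-`G` hypergraph on vertex type `W`: an injection `i` of the vertices
of `G` and a bijection `f` from the edges of `G` to the hyperedges `EH`,
such that each edge of `G` is embedded in the corresponding hyperedge. -/
structure BergeG {V : Type*} (G : SimpleGraph V) (W : Type*) where
  EH : Finset (Finset W)
  i : V ↪ W
  f : Sym2 V → Finset W
  f_mem : ∀ ⦃e⦄, e ∈ G.edgeSet → f e ∈ EH
  f_inj : ∀ ⦃e e'⦄, e ∈ G.edgeSet → e' ∈ G.edgeSet → f e = f e' → e = e'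
  f_surj : ∀ h ∈ EH, ∃ e ∈ G.edgeSet, f e = h
  contains : ∀ ⦃u v⦄, G.Adj u v → i u ∈ f s(u, v) ∧ i v ∈ f s(u, v)

/-- A dilation of a simple graph `G`, on the vertex type `W`: each vertex `v` of `G`
is blown up to a finset `vset v` containing the support vertex `supp v`, each edge `e`
of `G` gets a (possibly empty) finset `eset e` of additional vertices, all these finsets
being pairwise disjoint and covering `W`; the hyperedge corresponding to the edge
`e = {u,v}` is `vset u ∪ vset v ∪ eset e`, and all hyperedges have size at most the
rank `k ≥ 3`. -/
structure GraphDilation {V : Type*} (G : SimpleGraph V) (W : Type*) where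
  vset : V → Finset W
  supp : V → W
  eset : Sym2 V → Finset W
  k : ℕ
  k_ge : 3 ≤ k
  supp_mem : ∀ v, supp v ∈ vset v
  vset_disj : ∀ ⦃u v : V⦄, u ≠ v → Disjoint (vset u) (vset v)
  eset_disj : ∀ ⦃e f : Sym2 V⦄, e ∈ G.edgeSet → f ∈ G.edgeSet → e ≠ f →
    Disjoint (eset e) (eset f)
  vset_eset_disj : ∀ (v : V), ∀ ⦃e : Sym2 V⦄, e ∈ G.edgeSet → Disjoint (vset v) (eset e)
  card_le : ∀ ⦃u v : V⦄, G.Adj u v →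
    (vset u).card + (vset v).card + (eset s(u, v)).card ≤ k
  cover : ∀ w : W, (∃ v : V, w ∈ vset v) ∨ (∃ e ∈ G.edgeSet, w ∈ eset e)

/-- The hyperedge of a dilation corresponding to an edge `e` of the support graph. -/
noncomputable def GraphDilation.hedge {V W : Type*} {G : SimpleGraph V} (D : GraphDilation G W)
    (e : Sym2 V) : Finset W := by
  classical exact (sym2ToFinset e).biUnion D.vset ∪ D.eset e

/-- The hyperedge set of a dilation. -/
noncomputable def GraphDilation.edges {V W : Type*} [Fintype V] {G : SimpleGraph V}
    (D : GraphDilation G W) : Finset (Finset W) := by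
  classical exact ((Finset.univ : Finset (Sym2 V)).filter (· ∈ G.edgeSet)).image D.hedge


lemma mem_sym2ToFinset {V : Type*} {x : V} {e : Sym2 V} :
    x ∈ sym2ToFinset e ↔ x ∈ e := by
  classical
  induction e using Sym2.inductionOn with
  | hf a b => simp [sym2ToFinset, Sym2.mem_iff]

open Classical in
/-- Pick a vertex of `G` responsible for a vertex of the dilation. -/
noncomputable def dilPhi {V W : Type*} {G : SimpleGraph V} (D : GraphDilation G W) (w : W) : V :=
  if h : ∃ v, w ∈ D.vset v then h.choose
  else (((D.cover w).resolve_left h).choose).out.1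

lemma dilPhi_mem {V W : Type*} {G : SimpleGraph V} (D : GraphDilation G W)
    {w : W} {e : Sym2 V} (he : e ∈ G.edgeSet) (hw : w ∈ D.hedge e) :
    dilPhi D w ∈ e := by
  classical
  have hw' : (∃ a ∈ sym2ToFinset e, w ∈ D.vset a) ∨ w ∈ D.eset e := by
    simpa [GraphDilation.hedge, Finset.mem_union, Finset.mem_biUnion] using hw
  rcases hw' with ⟨a, ha, hwa⟩ | hwe
  · have h : ∃ v, w ∈ D.vset v := ⟨a, hwa⟩
    rw [dilPhi, dif_pos h]
    have : h.choose = a := by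
      by_contra hne
      exact Finset.disjoint_left.mp (D.vset_disj hne) h.choose_spec hwa
    rw [this]
    exact mem_sym2ToFinset.mp ha
  · have h : ¬ ∃ v, w ∈ D.vset v := by
      rintro ⟨v, hv⟩
      exact Finset.disjoint_left.mp (D.vset_eset_disj v he) hv hwe
    rw [dilPhi, dif_neg h]
    obtain ⟨he', hwe'⟩ := ((D.cover w).resolve_left h).choose_spec
    have : ((D.cover w).resolve_left h).choose = e := by
      by_contra hne
      exact Finset.disjoint_left.mp (D.eset_disj he' he hne) hwe' hwe
    rw [this]
    exact Sym2.out_fst_mem e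

lemma mem_dil_edges {V W : Type*} [Fintype V] {G : SimpleGraph V} (D : GraphDilation G W)
    {h : Finset W} : h ∈ D.edges ↔ ∃ e ∈ G.edgeSet, D.hedge e = h := by
  classical
  simp [GraphDilation.edges]

lemma mem_graphEdges {V : Type*} [Fintype V] {G : SimpleGraph V} {h : Finset V} :
    h ∈ graphEdges G ↔ ∃ e ∈ G.edgeSet, sym2ToFinset e = h := by
  classical
  simp [graphEdges]

lemma dil_trans_of_graph {V W : Type*} [Fintype V] {G : SimpleGraph V}
    (D : GraphDilation G W) {T : Finset V} (hT : IsTransversal (graphEdges G) T) :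
    ∃ S : Finset W, IsTransversal D.edges S ∧ S.card ≤ T.card := by
  classical
  refine ⟨T.image D.supp, ?_, Finset.card_image_le⟩
  intro h hh
  obtain ⟨e, he, rfl⟩ := (mem_dil_edges D).mp hh
  obtain ⟨v, hvT, hve⟩ := hT (sym2ToFinset e) (mem_graphEdges.mpr ⟨e, he, rfl⟩)
  refine ⟨D.supp v, Finset.mem_image_of_mem _ hvT, ?_⟩
  have : D.supp v ∈ (sym2ToFinset e).biUnion D.vset :=
    Finset.mem_biUnion.mpr ⟨v, hve, D.supp_mem v⟩
  simp [GraphDilation.hedge, Finset.mem_union, this]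

lemma graph_trans_of_dil {V W : Type*} [Fintype V] {G : SimpleGraph V}
    (D : GraphDilation G W) {S : Finset W} (hS : IsTransversal D.edges S) :
    ∃ T : Finset V, IsTransversal (graphEdges G) T ∧ T.card ≤ S.card := by
  classical
  refine ⟨S.image (dilPhi D), ?_, Finset.card_image_le⟩
  intro h hh
  obtain ⟨e, he, rfl⟩ := mem_graphEdges.mp hh
  obtain ⟨w, hwS, hwe⟩ := hS (D.hedge e) ((mem_dil_edges D).mpr ⟨e, he, rfl⟩)
  exact ⟨dilPhi D w, Finset.mem_image_of_mem _ hwS,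
    mem_sym2ToFinset.mpr (dilPhi_mem D he hwe)⟩

lemma trans_exists_dil {V W : Type*} [Fintype V] {G : SimpleGraph V}
    (D : GraphDilation G W) : ∃ S : Finset W, IsTransversal D.edges S := by
  classical
  refine ⟨D.edges.biUnion id, ?_⟩
  intro h hh
  obtain ⟨e, he, rfl⟩ := (mem_dil_edges D).mp hh
  have hne : (e.out.1) ∈ sym2ToFinset e := mem_sym2ToFinset.mpr (Sym2.out_fst_mem e)
  have hmem : D.supp e.out.1 ∈ D.hedge e := by
    have : D.supp e.out.1 ∈ (sym2ToFinset e).biUnion D.vset :=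
      Finset.mem_biUnion.mpr ⟨e.out.1, hne, D.supp_mem _⟩
    simp [GraphDilation.hedge, Finset.mem_union, this]
  exact ⟨D.supp e.out.1, Finset.mem_biUnion.mpr ⟨D.hedge e, hh, hmem⟩, hmem⟩

theorem dilation_tau_eq {V W : Type*} [Fintype V] (G : SimpleGraph V)
    (D : GraphDilation G W) :
    tauH D.edges = tauH (graphEdges G) := by
  classical
  obtain ⟨S0, hS0⟩ := trans_exists_dil D
  have h1 : {n | ∃ S : Finset W, IsTransversal D.edges S ∧ S.card = n}.Nonempty :=
    ⟨S0.card, S0, hS0, rfl⟩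
  obtain ⟨T0, hT0, _⟩ := graph_trans_of_dil D hS0
  have h2 : {n | ∃ T : Finset V, IsTransversal (graphEdges G) T ∧ T.card = n}.Nonempty :=
    ⟨T0.card, T0, hT0, rfl⟩
  apply le_antisymm
  · obtain ⟨T, hT, hTc⟩ := Nat.sInf_mem h2
    obtain ⟨S, hS, hSc⟩ := dil_trans_of_graph D hT
    calc tauH D.edges ≤ S.card := Nat.sInf_le ⟨S, hS, rfl⟩
      _ ≤ T.card := hSc
      _ = tauH (graphEdges G) := hTc
  · obtain ⟨S, hS, hSc⟩ := Nat.sInf_mem h1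
    obtain ⟨T, hT, hTc⟩ := graph_trans_of_dil D hS
    calc tauH (graphEdges G) ≤ T.card := Nat.sInf_le ⟨T, hT, rfl⟩
      _ ≤ S.card := hTc
      _ = tauH D.edges := hSc
end

section
/- Let G be a graph without isolated vertices and H a dilation of G with no additional vertices. Then γ(H) ≤ ν(H). -/
open Finset

/-- A matching of a simple graph (as a finset of edges, pairwise vertex-disjoint). -/
def IsGM {V : Type*} (G : SimpleGraph V) (M : Finset (Sym2 V)) : Prop :=
  (∀ e ∈ M, e ∈ G.edgeSet) ∧ ∀ e ∈ M, ∀ f ∈ M, e ≠ f → ∀ x, x ∈ e → x ∉ f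

lemma adj_of_mem_edge {V : Type*} {G : SimpleGraph V} {e : Sym2 V} (he : e ∈ G.edgeSet)
    {a b : V} (ha : a ∈ e) (hb : b ∈ e) (hab : a ≠ b) : G.Adj a b := by
  have h : e = s(a, b) := (Sym2.mem_and_mem_iff hab).mp ⟨ha, hb⟩
  exact G.mem_edgeSet.mp (h ▸ he)

/-- Bollobás–Cockayne type fact: a graph without isolated vertices has a matching `M`
and a dominating set of size at most `|M|`. -/
lemma exists_matching_dominating {V : Type*} [Fintype V] (G : SimpleGraph V)
    (hiso : ∀ v : V, ∃ u : V, G.Adj v u) :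
    ∃ (M : Finset (Sym2 V)) (Dg : Finset V),
      IsGM G M ∧ IsDominatingG G Dg ∧ Dg.card ≤ M.card := by
  classical
  let S : Finset (Finset (Sym2 V)) := (G.edgeFinset.powerset).filter (fun M => IsGM G M)
  have hSne : S.Nonempty := ⟨∅, Finset.mem_filter.mpr ⟨Finset.empty_mem_powerset _, by simp [IsGM]⟩⟩
  obtain ⟨M, hMS, hmax'⟩ := S.exists_max_image Finset.card hSne
  have hM : IsGM G M := (Finset.mem_filter.mp hMS).2
  have hmax : ∀ M' : Finset (Sym2 V), IsGM G M' → M'.card ≤ M.card := by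
    intro M' h
    apply hmax'
    exact Finset.mem_filter.mpr ⟨Finset.mem_powerset.mpr
      (fun e he => SimpleGraph.mem_edgeFinset.mpr (h.1 e he)), h⟩
  set unm : V → Prop := fun v => ∀ e ∈ M, v ∉ e with hunm
  have key : ∀ {a b : V}, unm a → unm b → ¬ G.Adj a b := by
    intro a b ha hb hadj
    have hnotmem : s(a, b) ∉ M := fun h => ha _ h (Sym2.mem_mk_left a b)
    have hM' : IsGM G (insert s(a, b) M) := by
      constructor
      · intro e he
        rcases Finset.mem_insert.mp he with rfl | he
        · exact G.mem_edgeSet.mpr hadj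
        · exact hM.1 e he
      · intro e he f hf hef x hxe hxf
        rcases Finset.mem_insert.mp he with rfl | heM
        · rcases Finset.mem_insert.mp hf with rfl | hfM
          · exact hef rfl
          · rcases Sym2.mem_iff.mp hxe with rfl | rfl
            · exact ha f hfM hxf
            · exact hb f hfM hxf
        · rcases Finset.mem_insert.mp hf with rfl | hfM
          · rcases Sym2.mem_iff.mp hxf with rfl | rfl
            · exact ha e heM hxe
            · exact hb e heM hxe
          · exact hM.2 e heM f hfM hef x hxe hxf
    have := hmax _ hM'
    rw [Finset.card_insert_of_notMem hnotmem] at this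
    omega
  set P : Sym2 V → V → Prop := fun e a => a ∈ e ∧ ∃ u, unm u ∧ G.Adj a u with hP
  set c : Sym2 V → V := fun e => if h : ∃ a, P e a then h.choose else e.out.1 with hc
  have hcmem : ∀ e, c e ∈ e := by
    intro e
    by_cases h : ∃ a, P e a
    · simp only [hc, dif_pos h]; exact h.choose_spec.1
    · simp only [hc, dif_neg h]; exact Sym2.out_fst_mem e
  refine ⟨M, M.image c, hM, ?_, Finset.card_image_le⟩
  intro v hv
  by_cases hvm : unm v
  · obtain ⟨u, hadj⟩ := hiso v
    have hum : ¬ unm u := fun h => key hvm h hadj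
    simp only [hunm, not_forall, not_not] at hum
    obtain ⟨e, heM, hue⟩ := hum
    have hex : ∃ a, P e a := ⟨u, hue, v, hvm, hadj.symm⟩
    have hce : P e (c e) := by
      simp only [hc, dif_pos hex]; exact hex.choose_spec
    obtain ⟨hcee, u', hu'unm, hadj'⟩ := hce
    by_cases hcv : G.Adj (c e) v
    · exact ⟨c e, Finset.mem_image_of_mem c heM, hcv⟩
    · exfalso
      have hceu : c e ≠ u := fun h => hcv (h ▸ hadj.symm)
      have hu'v : u' ≠ v := fun h => hcv (h ▸ hadj')
      have huv : u ≠ v := fun h => G.irrefl (h ▸ hadj)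
      have hvce : v ≠ c e := fun h => hvm e heM (h ▸ hcee)
      have hu'u : u' ≠ u := fun h => hu'unm e heM (h ▸ hue)
      have hu'ce : u' ≠ c e := fun h => hu'unm e heM (h ▸ hcee)
      have hu_not : ∀ f ∈ M.erase e, u ∉ f := fun f hf =>
        hM.2 e heM f (Finset.mem_of_mem_erase hf) (Ne.symm (Finset.ne_of_mem_erase hf)) u hue
      have hce_not : ∀ f ∈ M.erase e, c e ∉ f := fun f hf =>
        hM.2 e heM f (Finset.mem_of_mem_erase hf) (Ne.symm (Finset.ne_of_mem_erase hf)) _ hcee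
      have hv_not : ∀ f ∈ M.erase e, v ∉ f := fun f hf =>
        hvm f (Finset.mem_of_mem_erase hf)
      have hu'_not : ∀ f ∈ M.erase e, u' ∉ f := fun f hf =>
        hu'unm f (Finset.mem_of_mem_erase hf)
      set M' : Finset (Sym2 V) :=
        insert s(u, v) (insert s(c e, u') (M.erase e)) with hM'def
      have hM'gm : IsGM G M' := by
        constructor
        · intro g hg
          rcases Finset.mem_insert.mp hg with rfl | hg
          · exact G.mem_edgeSet.mpr (hadj.symm)
          · rcases Finset.mem_insert.mp hg with rfl | hg
            · exact G.mem_edgeSet.mpr hadj'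
            · exact hM.1 g (Finset.mem_of_mem_erase hg)
        · intro a ha b hb hab x hxa hxb
          rcases Finset.mem_insert.mp ha with rfl | haR
          · rcases Finset.mem_insert.mp hb with rfl | hbR
            · exact hab rfl
            · rcases Finset.mem_insert.mp hbR with rfl | hbE
              · rcases Sym2.mem_iff.mp hxa with rfl | rfl
                · rcases Sym2.mem_iff.mp hxb with h | h
                  · exact hceu h.symm
                  · exact hu'u h.symm
                · rcases Sym2.mem_iff.mp hxb with h | h
                  · exact hvce h
                  · exact hu'v h.symm
              · rcases Sym2.mem_iff.mp hxa with rfl | rfl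
                · exact hu_not b hbE hxb
                · exact hv_not b hbE hxb
          · rcases Finset.mem_insert.mp haR with rfl | haE
            · rcases Finset.mem_insert.mp hb with rfl | hbR
              · rcases Sym2.mem_iff.mp hxa with rfl | rfl
                · rcases Sym2.mem_iff.mp hxb with h | h
                  · exact hceu h
                  · exact hvce h.symm
                · rcases Sym2.mem_iff.mp hxb with h | h
                  · exact hu'u h
                  · exact hu'v h
              · rcases Finset.mem_insert.mp hbR with rfl | hbE
                · exact hab rfl
                · rcases Sym2.mem_iff.mp hxa with rfl | rfl
                  · exact hce_not b hbE hxb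
                  · exact hu'_not b hbE hxb
            · rcases Finset.mem_insert.mp hb with rfl | hbR
              · rcases Sym2.mem_iff.mp hxb with rfl | rfl
                · exact hu_not a haE hxa
                · exact hv_not a haE hxa
              · rcases Finset.mem_insert.mp hbR with rfl | hbE
                · rcases Sym2.mem_iff.mp hxb with rfl | rfl
                  · exact hce_not a haE hxa
                  · exact hu'_not a haE hxa
                · exact hM.2 a (Finset.mem_of_mem_erase haE) b (Finset.mem_of_mem_erase hbE)
                    hab x hxa hxb
      have h1 : s(c e, u') ∉ M.erase e :=
        fun h => hu'_not _ h (Sym2.mem_mk_right _ _)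
      have h2 : s(u, v) ∉ insert s(c e, u') (M.erase e) := by
        intro h
        rcases Finset.mem_insert.mp h with heq | h
        · have hu2 : u ∈ s(c e, u') := heq ▸ Sym2.mem_mk_left u v
          rcases Sym2.mem_iff.mp hu2 with h' | h'
          · exact hceu h'.symm
          · exact hu'u h'.symm
        · exact hv_not _ h (Sym2.mem_mk_right u v)
      have hpos : 1 ≤ M.card := Finset.card_pos.mpr ⟨e, heM⟩
      have hcard : M'.card = M.card + 1 := by
        rw [hM'def, Finset.card_insert_of_notMem h2, Finset.card_insert_of_notMem h1,
          Finset.card_erase_of_mem heM]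
        omega
      have := hmax M' hM'gm
      omega
  · simp only [hunm, not_forall, not_not] at hvm
    obtain ⟨e, heM, hve⟩ := hvm
    have hne : c e ≠ v := fun h => hv (h ▸ Finset.mem_image_of_mem c heM)
    exact ⟨c e, Finset.mem_image_of_mem c heM,
      adj_of_mem_edge (hM.1 e heM) (hcmem e) hve hne⟩

theorem dilation_gamma_le_nu {V W : Type*} [Fintype V] (G : SimpleGraph V)
    (hiso : ∀ v : V, ∃ u : V, G.Adj v u)
    (D : GraphDilation G W) (hno : ∀ e ∈ G.edgeSet, D.eset e = ∅) :
    gammaH D.edges ≤ nuH D.edges := by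
  classical
  obtain ⟨M, Dg, hM, hDg, hcard⟩ := exists_matching_dominating G hiso
  have hedge_mem : ∀ e ∈ G.edgeSet, ∀ w : W,
      w ∈ D.hedge e ↔ ∃ x ∈ e, w ∈ D.vset x := by
    intro e he w
    show w ∈ (sym2ToFinset e).biUnion D.vset ∪ D.eset e ↔ _
    rw [hno e he]
    simp [mem_sym2ToFinset]
  have hedge_in : ∀ e ∈ G.edgeSet, D.hedge e ∈ D.edges := by
    intro e he
    exact Finset.mem_image.mpr ⟨e, Finset.mem_filter.mpr ⟨Finset.mem_univ e, he⟩, rfl⟩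
  -- the matching in H
  set MH : Finset (Finset W) := M.image D.hedge with hMH
  have hMHsub : MH ⊆ D.edges := by
    intro h hh
    obtain ⟨e, heM, rfl⟩ := Finset.mem_image.mp hh
    exact hedge_in e (hM.1 e heM)
  have hMHdisj : ∀ a ∈ MH, ∀ b ∈ MH, a ≠ b → Disjoint a b := by
    intro a ha b hb hab
    obtain ⟨e, heM, rfl⟩ := Finset.mem_image.mp ha
    obtain ⟨f, hfM, rfl⟩ := Finset.mem_image.mp hb
    have hef : e ≠ f := fun h => hab (by rw [h])
    rw [Finset.disjoint_left]
    intro x hxe hxf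
    obtain ⟨p, hpe, hxp⟩ := (hedge_mem e (hM.1 e heM) x).mp hxe
    obtain ⟨q, hqf, hxq⟩ := (hedge_mem f (hM.1 f hfM) x).mp hxf
    by_cases hpq : p = q
    · exact hM.2 e heM f hfM hef p hpe (hpq ▸ hqf)
    · exact (Finset.disjoint_left.mp (D.vset_disj hpq) hxp) hxq
  have hMHcard : MH.card = M.card := by
    apply Finset.card_image_of_injOn
    intro e heM f hfM hef
    by_contra hne
    have ha : e.out.1 ∈ e := Sym2.out_fst_mem e
    have h1 : D.supp e.out.1 ∈ D.hedge e :=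
      (hedge_mem e (hM.1 e heM) _).mpr ⟨e.out.1, ha, D.supp_mem _⟩
    rw [hef] at h1
    obtain ⟨q, hqf, hsq⟩ := (hedge_mem f (hM.1 f hfM) _).mp h1
    by_cases hq : e.out.1 = q
    · exact hM.2 e heM f hfM hne e.out.1 ha (hq ▸ hqf)
    · exact (Finset.disjoint_left.mp (D.vset_disj hq) (D.supp_mem _)) hsq
  have hbdd : BddAbove {n | ∃ N : Finset (Finset W), IsHypMatching D.edges N ∧ N.card = n} := by
    refine ⟨D.edges.card, ?_⟩
    rintro n ⟨N, hN, rfl⟩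
    exact Finset.card_le_card hN.1
  have hnu : M.card ≤ nuH D.edges := by
    have hmem : M.card ∈ {n | ∃ N : Finset (Finset W), IsHypMatching D.edges N ∧ N.card = n} :=
      ⟨MH, ⟨hMHsub, hMHdisj⟩, hMHcard⟩
    exact le_csSup hbdd hmem
  -- the dominating set in H
  set DH : Finset W := Dg.image (fun v => D.supp v) with hDH
  have hdom : IsDominatingH D.edges DH := by
    intro w hw
    rcases D.cover w with ⟨v, hwv⟩ | ⟨e, he, hwe⟩
    · by_cases hvDg : v ∈ Dg
      · obtain ⟨u, hadj⟩ := hiso v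
        refine ⟨D.supp v, Finset.mem_image_of_mem _ hvDg,
          fun h => hw (h ▸ Finset.mem_image_of_mem _ hvDg),
          D.hedge s(v, u), hedge_in _ (G.mem_edgeSet.mpr hadj), ?_, ?_⟩
        · exact (hedge_mem _ (G.mem_edgeSet.mpr hadj) _).mpr
            ⟨v, Sym2.mem_mk_left v u, D.supp_mem v⟩
        · exact (hedge_mem _ (G.mem_edgeSet.mpr hadj) _).mpr ⟨v, Sym2.mem_mk_left v u, hwv⟩
      · obtain ⟨u, huDg, hadj⟩ := hDg v hvDg
        have hne : D.supp u ≠ w := fun h =>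
          (Finset.disjoint_left.mp (D.vset_disj (G.ne_of_adj hadj)) (h ▸ D.supp_mem u)) hwv
        refine ⟨D.supp u, Finset.mem_image_of_mem _ huDg, hne,
          D.hedge s(u, v), hedge_in _ (G.mem_edgeSet.mpr hadj), ?_, ?_⟩
        · exact (hedge_mem _ (G.mem_edgeSet.mpr hadj) _).mpr
            ⟨u, Sym2.mem_mk_left u v, D.supp_mem u⟩
        · exact (hedge_mem _ (G.mem_edgeSet.mpr hadj) _).mpr
            ⟨v, Sym2.mem_mk_right u v, hwv⟩
    · rw [hno e he] at hwe
      exact absurd hwe (Finset.notMem_empty w)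
  have hgam : gammaH D.edges ≤ DH.card := Nat.sInf_le ⟨DH, hdom, rfl⟩
  calc gammaH D.edges ≤ DH.card := hgam
    _ ≤ Dg.card := Finset.card_image_le
    _ ≤ M.card := hcard
    _ ≤ nuH D.edges := hnu
end
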